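/- No summable ideal is a σ-porous subset of the Cantor space: if (a_n) is a sequence of positive reals with ∑ a_n = ∞ and a_n → 0, then the set {A ⊆ ω : ∑_{n∈A} a_n < ∞}, viewed as a subset of 2^ω via characteristic functions, is not a countable union of porous sets. -/

import Mathlib

open Classical Filter

/-- A set of naturals is thick if it contains arbitrarily long intervals. -/
def Thick (T : Set ℕ) : Prop := ∀ p : ℕ, ∃ n : ℕ, ∀ k ≤ p, n + k ∈ T

/-- A set of naturals is syndetic if it has gaps of bounded length. -/
def Syndetic (S : Set ℕ) : Prop := ∃ p : ℕ, ∀ a : ℕ, ∃ k ≤ p, a + k ∈ S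

/-- Piecewise syndetic: intersection of a thick set and a syndetic set. -/
def PiecewiseSyndetic (P : Set ℕ) : Prop :=
  ∃ T S : Set ℕ, Thick T ∧ Syndetic S ∧ P = T ∩ S

/-- `A` contains an arithmetic progression of length `n`. -/
def HasAPSet (A : Set ℕ) (n : ℕ) : Prop :=
  ∃ a r : ℕ, 0 < r ∧ ∀ i < n, a + i * r ∈ A

/-- The standard ultrametric on Cantor space `2^ω`:
`ρ(x,y) = 2^{-min{i : x i ≠ y i}}` for `x ≠ y`, and `0` otherwise. -/
noncomputable def rho (x y : ℕ → Bool) : ℝ :=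
  if h : x = y then 0
  else (2 : ℝ) ^ (-(Nat.find (Function.ne_iff.mp h) : ℤ))

/-- Open ball in Cantor space with respect to `rho`. -/
def ball (x : ℕ → Bool) (ε : ℝ) : Set (ℕ → Bool) := {y | rho y x < ε}

/-- Metric porosity in Cantor space. -/
def Porous (E : Set (ℕ → Bool)) : Prop :=
  ∃ α : ℝ, 0 < α ∧ α < 1 ∧ ∃ ε₀ : ℝ, 0 < ε₀ ∧
    ∀ ε : ℝ, 0 < ε → ε ≤ ε₀ → ∀ x : ℕ → Bool,
      ∃ y : ℕ → Bool, ball y (α * ε) ⊆ ball x ε \ E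

/-- σ-porous: covered by countably many porous sets. -/
def SigmaPorous (E : Set (ℕ → Bool)) : Prop :=
  ∃ F : ℕ → Set (ℕ → Bool), (∀ n, Porous (F n)) ∧ E ⊆ ⋃ n, F n

/-- The basic clopen cylinder `[s]` of all extensions of a finite string `s`. -/
def Cyl (s : List Bool) : Set (ℕ → Bool) := {x | ∀ i < s.length, x i = s.getD i false}

/-- A point of Cantor space, viewed as a subset of ω, is thick. -/
def ThickB (x : ℕ → Bool) : Prop := ∀ p : ℕ, ∃ n : ℕ, ∀ k ≤ p, x (n + k) = true

/-- `x`, viewed as a subset of ω, contains an arithmetic progression of length `n`. -/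
def HasAP (x : ℕ → Bool) (n : ℕ) : Prop :=
  ∃ a r : ℕ, 0 < r ∧ ∀ i < n, x (a + i * r) = true

/-- `E_n`: points of Cantor space with no arithmetic progression of length `n`. -/
def ESet (n : ℕ) : Set (ℕ → Bool) := {x | ¬ HasAP x n}

/-- The van der Waerden ideal, as a subset of Cantor space. -/
def vdW : Set (ℕ → Bool) := ⋃ n, ESet n

/-- Ideal on ω, with members represented as points of Cantor space. -/
def IsIdealB (I : Set (ℕ → Bool)) : Prop :=
  (fun _ => false) ∈ I ∧
  (∀ x y : ℕ → Bool, (∀ n, x n = true → y n = true) → y ∈ I → x ∈ I) ∧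
  (∀ x y : ℕ → Bool, x ∈ I → y ∈ I → (fun n => x n || y n) ∈ I)

/-- `n`-porosity: every cylinder has a depth-`n` subcylinder missing `A`. -/
def NPorous (n : ℕ) (A : Set (ℕ → Bool)) : Prop :=
  ∀ s : List Bool, ∃ t : List Bool, t.length = n ∧ Cyl (s ++ t) ∩ A = ∅

/-- The length-`n` initial segment of `x` as a finite string. -/
def initSeg (x : ℕ → Bool) (n : ℕ) : List Bool := (List.range n).map x

/-- `S_n(A)`: the maximal size of `A ∩ {m, …, m+n}` over all `m`. -/
noncomputable def Sn (A : Set ℕ) (n : ℕ) : ℕ :=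
  sSup {k : ℕ | ∃ m : ℕ, (A ∩ Set.Icc m (m + n)).ncard = k}

/-- `A = {n², n²+1 : n ≥ 1}`. -/
def ASet : Set ℕ := {k | ∃ n : ℕ, 1 ≤ n ∧ (k = n ^ 2 ∨ k = n ^ 2 + 1)}

/-- `P = {x ∈ 2^ω : x(k) = 0 for all k ∉ A}`. -/
def CantorP : Set (ℕ → Bool) := {x | ∀ k, k ∉ ASet → x k = false}

lemma rho_self (x : ℕ → Bool) : rho x x = 0 := dif_pos rfl
lemma rho_le_of_agree {z y : ℕ → Bool} {n : ℕ} (h : ∀ i < n, z i = y i) :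
    rho z y ≤ (2:ℝ) ^ (-(n:ℤ)) := by
  unfold rho
  split
  · positivity
  · rename_i hne
    have hfind : n ≤ Nat.find (Function.ne_iff.mp hne) := by
      by_contra hlt
      push_neg at hlt
      exact Nat.find_spec (Function.ne_iff.mp hne) (h _ hlt)
    exact zpow_le_zpow_right₀ one_le_two (by omega)
lemma agree_of_rho_lt {z y : ℕ → Bool} {n : ℕ} (h : rho z y < (2:ℝ) ^ (1-(n:ℤ))) :
    ∀ i < n, z i = y i := by
  intro i hi
  unfold rho at h
  split at h
  · rename_i he; rw [he]
  · rename_i hne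
    have := (zpow_lt_zpow_iff_right₀ (by norm_num : (1:ℝ) < 2)).mp h
    have hn : n ≤ Nat.find (Function.ne_iff.mp hne) := by omega
    have := Nat.find_min (Function.ne_iff.mp hne) (lt_of_lt_of_le hi hn)
    simpa using this

lemma porous_key {F : Set (ℕ → Bool)} (hF : Porous F) :
    ∃ c L₀ : ℕ, ∀ s : List Bool, L₀ ≤ s.length →
      ∃ u : List Bool, u.length = c ∧ Cyl (s ++ u) ∩ F = ∅ := by
  obtain ⟨α, hα0, hα1, ε₀, hε₀, hP⟩ := hF
  obtain ⟨c, hc⟩ := exists_pow_lt_of_lt_one hα0 (by norm_num : (1/2:ℝ) < 1)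
  obtain ⟨n₀, hn₀⟩ := exists_pow_lt_of_lt_one hε₀ (by norm_num : (1/2:ℝ) < 1)
  refine ⟨c, n₀ + 1, fun s hs => ?_⟩
  set L := s.length with hL
  have hεpos : (0:ℝ) < (2:ℝ) ^ (1 - (L:ℤ)) := by positivity
  have hεle : (2:ℝ) ^ (1 - (L:ℤ)) ≤ ε₀ := by
    have h1 : (2:ℝ) ^ (1 - (L:ℤ)) ≤ (2:ℝ) ^ (-(n₀:ℤ)) :=
      zpow_le_zpow_right₀ one_le_two (by omega)
    have h2 : (2:ℝ) ^ (-(n₀:ℤ)) = (1/2:ℝ) ^ n₀ := by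
      rw [zpow_neg, zpow_natCast, one_div, inv_pow]
    linarith [h1, h2 ▸ hn₀.le]
  obtain ⟨y, hy⟩ := hP _ hεpos hεle (fun i => s.getD i false)
  have hymem : y ∈ ball (fun i => s.getD i false) ((2:ℝ) ^ (1 - (L:ℤ))) \ F :=
    hy (by simpa [ball, rho_self] using mul_pos hα0 hεpos)
  have hys : ∀ i < L, y i = s.getD i false := agree_of_rho_lt hymem.1
  refine ⟨(List.range c).map (fun j => y (L + j)), by simp, ?_⟩
  ext z
  simp only [Set.mem_inter_iff, Set.mem_empty_iff_false, iff_false, not_and]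
  intro hz hzF
  -- z agrees with y on first L + c coords
  have hagree : ∀ i < L + c, z i = y i := by
    intro i hi
    have hlen : (s ++ (List.range c).map (fun j => y (L + j))).length = L + c := by simp [hL]
    have := hz i (by rw [Cyl] at *; omega)
    rw [Cyl] at hz
    have hzi := hz i (by simp; omega)
    rcases lt_or_ge i L with h | h
    · rw [hzi, List.getD_append _ _ _ _ h] at *
      exact (hys i h).symm ▸ hzi
    · have : (s ++ (List.range c).map (fun j => y (L + j))).getD i false = y i := by
        rw [List.getD_append_right _ _ _ _ h]
        have hic : i - L < c := by omega
        simp [List.getD_eq_getElem?_getD, List.getElem?_map, List.getElem?_range hic]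
        rw [← hL, List.getElem?_range hic]
        show y (L + (i - L)) = y i
        congr 1; omega
      rw [this] at hzi; exact hzi
  -- hence z ∈ ball y (α * ε)
  have hzball : z ∈ ball y (α * (2:ℝ) ^ (1 - (L:ℤ))) := by
    have h1 : rho z y ≤ (2:ℝ) ^ (-((L + c : ℕ):ℤ)) := rho_le_of_agree hagree
    have h2 : (2:ℝ) ^ (-((L + c : ℕ):ℤ)) < α * (2:ℝ) ^ (1 - (L:ℤ)) := by
      have hca : (2:ℝ) ^ (-(c:ℤ)) < α := by
        have : (2:ℝ) ^ (-(c:ℤ)) = (1/2:ℝ) ^ c := by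
          rw [zpow_neg, zpow_natCast, one_div, inv_pow]
        linarith [this ▸ hc]
      have : (2:ℝ) ^ (-((L + c : ℕ):ℤ)) = (2:ℝ) ^ (-(c:ℤ)) * (2:ℝ) ^ (-(L:ℤ)) := by
        rw [← zpow_add₀ (by norm_num : (2:ℝ) ≠ 0)]; congr 1; push_cast; ring
      rw [this]
      have hL2 : (0:ℝ) < (2:ℝ) ^ (-(L:ℤ)) := by positivity
      have h3 : (2:ℝ) ^ (-(c:ℤ)) * (2:ℝ) ^ (-(L:ℤ)) < α * (2:ℝ) ^ (-(L:ℤ)) :=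
        (mul_lt_mul_of_pos_right hca hL2)
      have h4 : α * (2:ℝ) ^ (-(L:ℤ)) < α * (2:ℝ) ^ (1-(L:ℤ)) := by
        have := zpow_lt_zpow_right₀ (by norm_num : (1:ℝ) < 2) (by omega : -(L:ℤ) < 1 - L)
        exact mul_lt_mul_of_pos_left this hα0
      linarith
    exact lt_of_le_of_lt h1 h2
  exact (hy hzball).2 hzF


/-- No summable ideal is σ-porous in Cantor space. -/
theorem summable_ideal_not_sigmaPorous (a : ℕ → ℝ) (hpos : ∀ n, 0 < a n)
    (hdiv : Tendsto (fun N => ∑ i ∈ Finset.range N, a i) atTop atTop)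
    (hzero : Tendsto a atTop (nhds 0)) :
    ¬ SigmaPorous {x : ℕ → Bool | Summable fun n => if x n = true then a n else 0} := by
  rintro ⟨F, hPor, hsub⟩
  choose c L₀ hkey using fun n => porous_key (hPor n)
  have key' : ∀ (n : ℕ) (s : List Bool), ∃ u : List Bool,
      L₀ n ≤ s.length → u.length = c n ∧ Cyl (s ++ u) ∩ F n = ∅ := by
    intro n s
    by_cases h : L₀ n ≤ s.length
    · obtain ⟨u, hu⟩ := hkey n s h; exact ⟨u, fun _ => hu⟩
    · exact ⟨[], fun h' => absurd h' h⟩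
  choose U hU using key'
  have hsmall : ∀ n : ℕ, ∃ N : ℕ, ∀ k ≥ N, a k ≤ (1/2:ℝ)^n / (c n + 1) := by
    intro n
    have hδ : (0:ℝ) < (1/2:ℝ)^n / (c n + 1) := by positivity
    obtain ⟨N, hN⟩ := Metric.tendsto_atTop.mp hzero _ hδ
    refine ⟨N, fun k hk => ?_⟩
    have := hN k hk
    rw [Real.dist_eq, sub_zero, abs_of_pos (hpos k)] at this
    exact this.le
  choose N hN using hsmall
  set pad : ℕ → ℕ := fun n => L₀ n + N n + 1 with hpad
  set str : ℕ → List Bool := fun n => Nat.rec (motive := fun _ => List Bool) []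
    (fun n prev => (prev ++ List.replicate (pad n) false) ++
      U n (prev ++ List.replicate (pad n) false)) n with hstrdef
  have hstrS : ∀ n, str (n+1) = (str n ++ List.replicate (pad n) false) ++
      U n (str n ++ List.replicate (pad n) false) := fun n => rfl
  have hlen' : ∀ n, L₀ n ≤ (str n ++ List.replicate (pad n) false).length := by
    intro n; simp [hpad]; omega
  have hUlen : ∀ n, (U n (str n ++ List.replicate (pad n) false)).length = c n :=
    fun n => (hU n _ (hlen' n)).1
  have hCylEmpty : ∀ n, Cyl (str (n+1)) ∩ F n = ∅ := fun n => (hU n _ (hlen' n)).2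
  have hmono : ∀ n, (str (n+1)).length = (str n).length + pad n + c n := by
    intro n; rw [hstrS n]; simp [hUlen n]; omega
  have hgrow : ∀ n, n ≤ (str n).length := by
    intro n; induction n with
    | zero => simp
    | succ n ih => have := hmono n; simp only [hpad] at this; omega
  have hpre : ∀ n, str n <+: str (n+1) := by
    intro n; rw [hstrS n]
    exact ((str n).prefix_append _).trans (List.prefix_append _ _)
  have hprefix : ∀ m n, m ≤ n → str m <+: str n := by
    intro m n h
    induction n with
    | zero => rw [Nat.le_zero.mp h]
    | succ n ih =>
      rcases Nat.lt_or_ge m (n+1) with h' | h'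
      · exact (ih (by omega)).trans (hpre n)
      · rw [Nat.le_antisymm h h']
  have hgetD : ∀ {l₁ l₂ : List Bool}, l₁ <+: l₂ → ∀ i < l₁.length,
      l₂.getD i false = l₁.getD i false := by
    rintro l₁ l₂ ⟨t, ht⟩ i hi
    rw [← ht, List.getD_append _ _ _ _ hi]
  set x : ℕ → Bool := fun i => (str (i+1)).getD i false with hxdef
  have hxval : ∀ n i, i < (str n).length → x i = (str n).getD i false := by
    intro n i hi
    rcases le_total n (i+1) with h | h
    · exact hgetD (hprefix n (i+1) h) i hi
    · exact (hgetD (hprefix (i+1) n h) i (lt_of_lt_of_le (Nat.lt_succ_self i)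
        (hgrow (i+1)))).symm
  have hxCyl : ∀ n, x ∈ Cyl (str n) := fun n i hi => hxval n i hi
  have hxF : ∀ n, x ∉ F n := fun n hxFn =>
    Set.eq_empty_iff_forall_notMem.mp (hCylEmpty n) x ⟨hxCyl (n+1), hxFn⟩
  -- x is in the summable ideal
  set f : ℕ → ℝ := fun i => if x i = true then a i else 0 with hfdef
  have hf0 : ∀ i, 0 ≤ f i := by
    intro i; simp only [hfdef]; split
    · exact (hpos i).le
    · exact le_refl 0
  have hblock : ∀ n, ∑ i ∈ Finset.Ico (str n).length (str (n+1)).length, f i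
      ≤ (1/2:ℝ)^n := by
    intro n
    set A := (str n).length
    set B := (str (n+1)).length
    have hAB1 : A ≤ A + pad n := by omega
    have hAB2 : A + pad n ≤ B := by have := hmono n; omega
    rw [← Finset.sum_Ico_consecutive f hAB1 hAB2]
    have h1 : ∑ i ∈ Finset.Ico A (A + pad n), f i = 0 := by
      apply Finset.sum_eq_zero
      intro i hi
      simp only [Finset.mem_Ico] at hi
      have hiB : i < B := by omega
      have hx1 : x i = (str (n+1)).getD i false := hxval (n+1) i hiB
      have hx2 : (str (n+1)).getD i false = false := by
        rw [hstrS n]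
        have hilt : i < (str n ++ List.replicate (pad n) false).length := by
          simp; omega
        rw [List.getD_append _ _ _ _ hilt,
          List.getD_append_right _ _ _ _ hi.1]
        simp
      have hxi : x i = false := by rw [hx1, hx2]
      show (if x i = true then a i else 0) = 0
      rw [hxi]; simp
    have h2 : ∑ i ∈ Finset.Ico (A + pad n) B, f i
        ≤ (c n : ℝ) * ((1/2:ℝ)^n / (c n + 1)) := by
      have hcard : (Finset.Ico (A + pad n) B).card = c n := by
        rw [Nat.card_Ico]; have := hmono n; omega
      calc ∑ i ∈ Finset.Ico (A + pad n) B, f i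
          ≤ ∑ _i ∈ Finset.Ico (A + pad n) B, ((1/2:ℝ)^n / (c n + 1)) := by
            apply Finset.sum_le_sum
            intro i hi
            simp only [Finset.mem_Ico] at hi
            have hiN : N n ≤ i := by simp only [hpad] at hi; omega
            simp only [hfdef]
            split
            · exact hN n i hiN
            · positivity
        _ = (c n : ℝ) * ((1/2:ℝ)^n / (c n + 1)) := by
            rw [Finset.sum_const, hcard, nsmul_eq_mul]
    have h3 : (c n : ℝ) * ((1/2:ℝ)^n / (c n + 1)) ≤ (1/2:ℝ)^n := by
      rw [mul_div_assoc', div_le_iff₀ (by positivity)]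
      have : (0:ℝ) ≤ (1/2:ℝ)^n := by positivity
      nlinarith
    linarith
  have hpartial : ∀ n, ∑ i ∈ Finset.range ((str n).length), f i
      ≤ ∑ m ∈ Finset.range n, (1/2:ℝ)^m := by
    intro n
    induction n with
    | zero => simp [hstrdef]
    | succ n ih =>
      have hle : (str n).length ≤ (str (n+1)).length := by rw [hmono n]; omega
      rw [Finset.range_eq_Ico,
        ← Finset.sum_Ico_consecutive f (Nat.zero_le _) hle,
        ← Finset.range_eq_Ico, Finset.sum_range_succ]
      exact add_le_add ih (hblock n)
  have hsum : Summable f := by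
    apply summable_of_sum_range_le hf0 (c := 2)
    intro M
    calc ∑ i ∈ Finset.range M, f i
        ≤ ∑ i ∈ Finset.range ((str M).length), f i := by
          apply Finset.sum_le_sum_of_subset_of_nonneg
          · exact Finset.range_subset_range.mpr (hgrow M)
          · intro i _ _; exact hf0 i
      _ ≤ ∑ m ∈ Finset.range M, (1/2:ℝ)^m := hpartial M
      _ ≤ 2 := sum_geometric_two_le M
  have hxI : x ∈ {x : ℕ → Bool | Summable fun n => if x n = true then a n else 0} := hsum
  obtain ⟨n, hn⟩ := Set.mem_iUnion.mp (hsub hxI)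
  exact hxF n hn
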